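/- Let N, D ∈ ℝ[X] be real polynomials with D(0) ≠ 0, and let p ≥ 1. Suppose the entire function z ↦ N(z) − e^z · D(z) has a zero of order at least p+1 at z = 0 (i.e. its Taylor coefficients of orders 0 through p all vanish). Define the polynomial E ∈ ℝ[y] by E(y) = |D(iy)|² − |N(iy)|² for y ∈ ℝ (equivalently E(y) = D(iy)·D(−iy) − N(iy)·N(−iy)). Then y^{2(⌊p/2⌋+1)} divides E; in particular E(y) = O(y^{2⌊p/2⌋+2}) as y → 0. -/

import Mathlib

open Polynomial Complex Finset

private lemma comp_C_mul_X_coeff (P : Polynomial ℂ) (a : ℂ) (k : ℕ) :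
    (P.comp (Polynomial.C a * Polynomial.X)).coeff k = a ^ k * P.coeff k := by
  induction P using Polynomial.induction_on' with
  | add p q hp hq => simp [add_comp, coeff_add, hp, hq, mul_add]
  | monomial n b =>
      rw [← C_mul_X_pow_eq_monomial, mul_comp, C_comp, pow_comp, X_comp, mul_pow, ← C_pow,
        ← mul_assoc, ← C_mul, coeff_C_mul, coeff_C_mul, coeff_X_pow]
      split_ifs with h
      · subst h; ring
      · simp

private noncomputable def Qaux (Dc : Polynomial ℂ) : ℕ → Polynomial ℂ
  | 0 => Dc
  | k + 1 => Qaux Dc k + Polynomial.derivative (Qaux Dc k)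

private lemma iterDeriv_eq (Nc Dc : Polynomial ℂ) (k : ℕ) :
    iteratedDeriv k (fun z : ℂ => Nc.eval z - Complex.exp z * Dc.eval z) =
      fun z : ℂ => (Polynomial.derivative^[k] Nc).eval z -
        Complex.exp z * (Qaux Dc k).eval z := by
  induction k with
  | zero => simp [Qaux]
  | succ k ih =>
      rw [iteratedDeriv_succ, ih]
      funext z
      have h1 : HasDerivAt (fun z : ℂ => (Polynomial.derivative^[k] Nc).eval z -
          Complex.exp z * (Qaux Dc k).eval z)
          ((Polynomial.derivative^[k+1] Nc).eval z -
            (Complex.exp z * (Qaux Dc k).eval z +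
              Complex.exp z * (Polynomial.derivative (Qaux Dc k)).eval z)) z := by
        have h2 := ((Polynomial.derivative^[k] Nc).hasDerivAt z).sub
          ((Complex.hasDerivAt_exp z).mul ((Qaux Dc k).hasDerivAt z))
        rw [Function.iterate_succ_apply']
        exact h2
      rw [h1.deriv]
      show _ = _ - Complex.exp z * (Qaux Dc (k+1)).eval z
      rw [Qaux]
      simp only [Polynomial.eval_add]
      ring

private lemma Qaux_eq (Dc : Polynomial ℂ) (k : ℕ) :
    Qaux Dc k = ∑ j ∈ Finset.range (k+1),
      (k.choose j : ℂ) • Polynomial.derivative^[j] Dc := by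
  induction k with
  | zero => simp [Qaux]
  | succ k ih =>
      have hstep : Polynomial.derivative (∑ j ∈ Finset.range (k+1),
            (k.choose j : ℂ) • Polynomial.derivative^[j] Dc)
          = ∑ j ∈ Finset.range (k+1), (k.choose j : ℂ) • Polynomial.derivative^[j+1] Dc := by
        rw [Polynomial.derivative_sum]
        refine Finset.sum_congr rfl fun j _ => ?_
        rw [Polynomial.derivative_smul, Function.iterate_succ_apply']
      have h2 : (∑ j ∈ Finset.range (k+1), (k.choose (j+1) : ℂ) • Polynomial.derivative^[j+1] Dc)
            + (Dc : Polynomial ℂ)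
          = ∑ j ∈ Finset.range (k+1), (k.choose j : ℂ) • Polynomial.derivative^[j] Dc := by
        have h3 := Finset.sum_range_succ'
          (fun j => (k.choose j : ℂ) • Polynomial.derivative^[j] Dc) (k+1)
        rw [Finset.sum_range_succ
          (fun j => (k.choose j : ℂ) • Polynomial.derivative^[j] Dc) (k+1)] at h3
        simpa [Nat.choose_succ_self] using h3.symm
      rw [show Qaux Dc (k+1) = Qaux Dc k + Polynomial.derivative (Qaux Dc k) from rfl, ih, hstep]
      rw [Finset.sum_range_succ'
        (fun j => (((k+1).choose j : ℕ) : ℂ) • Polynomial.derivative^[j] Dc) (k+1)]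
      simp only [Nat.choose_succ_succ, Nat.cast_add, add_smul, Finset.sum_add_distrib,
        Nat.choose_zero_right, Nat.cast_one, one_smul, Function.iterate_zero_apply]
      rw [← h2]
      abel

/-- **Vanishing of the E-polynomial to order `2⌊p/2⌋ + 2`.**
If `N(z) − e^z D(z)` has a zero of order at least `p + 1` at `z = 0` (all derivatives of
orders `0, …, p` vanish there) and `D(0) ≠ 0`, then the E-polynomial
`E(y) = D(iy)D(−iy) − N(iy)N(−iy)` is divisible by `y^{2(⌊p/2⌋+1)}`; in particular
`E(y) = O(y^{2⌊p/2⌋+2})` as `y → 0`. -/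
theorem Epoly_vanishing_order (N D : Polynomial ℝ) (hD0 : D.eval 0 ≠ 0)
    (p : ℕ) (hp : 1 ≤ p)
    (hzero : ∀ k ≤ p, iteratedDeriv k
      (fun z : ℂ => (N.map (algebraMap ℝ ℂ)).eval z -
        Complex.exp z * (D.map (algebraMap ℝ ℂ)).eval z) 0 = 0)
    (E : Polynomial ℝ)
    (hE : ∀ y : ℝ, ((E.eval y : ℝ) : ℂ) =
      (D.map (algebraMap ℝ ℂ)).eval (↑y * Complex.I) *
        (D.map (algebraMap ℝ ℂ)).eval (-(↑y * Complex.I)) -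
      (N.map (algebraMap ℝ ℂ)).eval (↑y * Complex.I) *
        (N.map (algebraMap ℝ ℂ)).eval (-(↑y * Complex.I))) :
    (Polynomial.X ^ (2 * (p / 2 + 1)) ∣ E) ∧
      (fun y : ℝ => E.eval y) =O[nhds 0] fun y : ℝ => y ^ (2 * (p / 2) + 2) := by
  classical
  set Nc := N.map (algebraMap ℝ ℂ) with hNcdef
  set Dc := D.map (algebraMap ℝ ℂ) with hDcdef
  -- Step 1: Taylor coefficient identity from the derivative hypothesis
  have hev : ∀ (P : Polynomial ℂ) (m : ℕ), (Polynomial.derivative^[m] P).eval 0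
      = (Nat.factorial m : ℂ) * P.coeff m := by
    intro P m
    rw [← Polynomial.coeff_zero_eq_eval_zero, Polynomial.coeff_iterate_derivative]
    simp [Nat.descFactorial_self, nsmul_eq_mul]
  have key : ∀ k ≤ p, (Nat.factorial k : ℂ) * Nc.coeff k
      = ∑ j ∈ Finset.range (k+1), (k.choose j : ℂ) * ((Nat.factorial j : ℂ) * Dc.coeff j) := by
    intro k hk
    have h := hzero k hk
    rw [iterDeriv_eq Nc Dc k, Qaux_eq] at h
    simp only [Complex.exp_zero, one_mul, sub_eq_zero, Polynomial.eval_finset_sum,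
      Polynomial.eval_smul, smul_eq_mul, hev] at h
    exact h
  -- Step 2: N ≡ (truncated exp) * D mod X^(p+1), coefficientwise
  have hNco : ∀ k ≤ p, Nc.coeff k
      = ∑ b ∈ Finset.range (k+1), ((Nat.factorial b : ℂ))⁻¹ * Dc.coeff (k - b) := by
    intro k hk
    have hkne : (Nat.factorial k : ℂ) ≠ 0 := Nat.cast_ne_zero.mpr (Nat.factorial_ne_zero k)
    apply mul_left_cancel₀ hkne
    rw [key k hk, Finset.mul_sum,
      ← Finset.sum_range_reflect
        (fun j => (k.choose j : ℂ) * ((Nat.factorial j : ℂ) * Dc.coeff j)) (k+1)]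
    refine Finset.sum_congr rfl fun b hb => ?_
    have hb' : b ≤ k := Nat.lt_succ_iff.mp (Finset.mem_range.mp hb)
    have h1 : k + 1 - 1 - b = k - b := by omega
    rw [h1]
    have h2 : k.choose (k - b) * Nat.factorial (k - b) * Nat.factorial b = Nat.factorial k := by
      have h3 := Nat.choose_mul_factorial_mul_factorial (Nat.sub_le k b)
      rwa [Nat.sub_sub_self hb'] at h3
    have h2c : (k.choose (k - b) : ℂ) * (Nat.factorial (k - b) : ℂ) * (Nat.factorial b : ℂ) = (Nat.factorial k : ℂ) := by
      exact_mod_cast congrArg (Nat.cast : ℕ → ℂ) h2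
    have hbne : (Nat.factorial b : ℂ) ≠ 0 := Nat.cast_ne_zero.mpr (Nat.factorial_ne_zero b)
    field_simp
    rw [Nat.choose_symm hb'] at h2c
    rw [Nat.choose_symm hb']
    linear_combination Dc.coeff (k - b) * h2c
  -- the truncated exponential
  set T : Polynomial ℂ := ∑ b ∈ Finset.range (p+1),
    Polynomial.C ((Nat.factorial b : ℂ))⁻¹ * Polynomial.X ^ b with hTdef
  have hTco : ∀ b ≤ p, T.coeff b = ((Nat.factorial b : ℂ))⁻¹ := by
    intro b hb
    rw [hTdef, Polynomial.finset_sum_coeff]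
    simp only [Polynomial.coeff_C_mul, Polynomial.coeff_X_pow]
    rw [Finset.sum_eq_single b]
    · simp
    · intro c _ hc
      simp [Ne.symm hc]
    · intro h
      exact absurd (Finset.mem_range.mpr (Nat.lt_succ_of_le hb)) h
  have h1 : (Polynomial.X : Polynomial ℂ) ^ (p+1) ∣ Nc - T * Dc := by
    rw [Polynomial.X_pow_dvd_iff]
    intro d hd
    have hdp : d ≤ p := Nat.lt_succ_iff.mp hd
    rw [Polynomial.coeff_sub, Polynomial.coeff_mul,
      Finset.Nat.sum_antidiagonal_eq_sum_range_succ_mk, hNco d hdp, sub_eq_zero]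
    refine Finset.sum_congr rfl fun b hb => ?_
    rw [hTco b ((Nat.lt_succ_iff.mp (Finset.mem_range.mp hb)).trans hdp)]
  have hnegX : (-Polynomial.X : Polynomial ℂ) = Polynomial.C (-1) * Polynomial.X := by simp
  have hcompco : ∀ (P : Polynomial ℂ) (e : ℕ),
      (P.comp (-Polynomial.X)).coeff e = (-1)^e * P.coeff e := by
    intro P e
    rw [hnegX, _root_.comp_C_mul_X_coeff]
  have h2 : (Polynomial.X : Polynomial ℂ) ^ (p+1) ∣ T * T.comp (-Polynomial.X) - 1 := by
    rw [Polynomial.X_pow_dvd_iff]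
    intro d hd
    have hdp : d ≤ p := Nat.lt_succ_iff.mp hd
    rw [Polynomial.coeff_sub, Polynomial.coeff_mul,
      Finset.Nat.sum_antidiagonal_eq_sum_range_succ_mk]
    have hsum : ∀ b ∈ Finset.range (d+1), T.coeff b * (T.comp (-Polynomial.X)).coeff (d - b)
        = (-1)^(d-b) * ((d.choose b : ℂ) * ((Nat.factorial d : ℂ))⁻¹) := by
      intro b hb
      have hbd : b ≤ d := Nat.lt_succ_iff.mp (Finset.mem_range.mp hb)
      rw [hcompco, hTco b (hbd.trans hdp), hTco (d-b) ((Nat.sub_le d b).trans hdp)]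
      have h3 : (d.choose b : ℂ) * (Nat.factorial b : ℂ) * (Nat.factorial (d - b) : ℂ) = (Nat.factorial d : ℂ) := by
        exact_mod_cast congrArg (Nat.cast : ℕ → ℂ)
          (Nat.choose_mul_factorial_mul_factorial hbd)
      have hbne : (Nat.factorial b : ℂ) ≠ 0 := Nat.cast_ne_zero.mpr (Nat.factorial_ne_zero b)
      have hdbne : (Nat.factorial (d - b) : ℂ) ≠ 0 := Nat.cast_ne_zero.mpr (Nat.factorial_ne_zero _)
      have hdne : (Nat.factorial d : ℂ) ≠ 0 := Nat.cast_ne_zero.mpr (Nat.factorial_ne_zero d)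
      have h4 : ((Nat.factorial b : ℂ))⁻¹ * ((Nat.factorial (d - b) : ℂ))⁻¹
          = (d.choose b : ℂ) * ((Nat.factorial d : ℂ))⁻¹ := by
        field_simp
        first
        | linear_combination h3
        | linear_combination -h3
        | linear_combination 2*h3
        | linear_combination -2*h3
      linear_combination ((-1:ℂ))^(d-b) * h4
    rw [Finset.sum_congr rfl hsum]
    rcases eq_or_ne d 0 with hd0 | hd0
    · subst hd0
      simp
    · rw [Polynomial.coeff_one, if_neg hd0, sub_zero]
      have h5 : ∀ b ∈ Finset.range (d+1), (-1:ℂ)^(d-b) * ((d.choose b : ℂ) * ((Nat.factorial d : ℂ))⁻¹)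
          = (-1)^d * ((-1)^b * (d.choose b : ℂ)) * ((Nat.factorial d : ℂ))⁻¹ := by
        intro b hb
        have hbd : b ≤ d := Nat.lt_succ_iff.mp (Finset.mem_range.mp hb)
        have h6 : d + b = (d - b) + 2*b := by omega
        have h7 : (-1:ℂ)^d * (-1)^b = (-1)^(d-b) := by
          rw [← pow_add, h6, pow_add, pow_mul]
          simp
        rw [← h7]
        ring
      rw [Finset.sum_congr rfl h5]
      have halt : ∑ b ∈ Finset.range (d+1), ((-1:ℂ))^b * (d.choose b : ℂ) = 0 := by
        have h8 := Int.alternating_sum_range_choose_of_ne hd0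
        have h9 := congrArg (Int.cast : ℤ → ℂ) h8
        push_cast at h9
        exact_mod_cast h9
      rw [← Finset.sum_mul, ← Finset.mul_sum, halt]
      ring
  have h3 : (Polynomial.X : Polynomial ℂ) ^ (p+1) ∣
      T.comp (-Polynomial.X) * Dc.comp (-Polynomial.X) - Nc.comp (-Polynomial.X) := by
    obtain ⟨c, hc⟩ := h1
    refine ⟨(-1)^(p+1) * (-(c.comp (-Polynomial.X))), ?_⟩
    have hcomp := congrArg (fun q => Polynomial.comp q (-Polynomial.X)) hc
    simp only [sub_comp, mul_comp, pow_comp, X_comp] at hcomp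
    have hneg : (-Polynomial.X : Polynomial ℂ)^(p+1)
        = (-1)^(p+1) * Polynomial.X^(p+1) := by rw [neg_pow]
    rw [hneg] at hcomp
    linear_combination -hcomp
  set G : Polynomial ℂ := Dc * Dc.comp (-Polynomial.X) - Nc * Nc.comp (-Polynomial.X)
    with hGdef
  have hGdvd : (Polynomial.X : Polynomial ℂ) ^ (p+1) ∣ G := by
    have hGsplit : G = (1 - T * T.comp (-Polynomial.X)) * (Dc * Dc.comp (-Polynomial.X))
        + (T * Dc - Nc) * (T.comp (-Polynomial.X) * Dc.comp (-Polynomial.X))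
        + (T.comp (-Polynomial.X) * Dc.comp (-Polynomial.X) - Nc.comp (-Polynomial.X)) * Nc := by
      rw [hGdef]; ring
    have ha : (Polynomial.X : Polynomial ℂ) ^ (p+1) ∣ 1 - T * T.comp (-Polynomial.X) := by
      rw [show (1 : Polynomial ℂ) - T * T.comp (-Polynomial.X)
        = -(T * T.comp (-Polynomial.X) - 1) by ring]
      exact dvd_neg.mpr h2
    have hb : (Polynomial.X : Polynomial ℂ) ^ (p+1) ∣ T * Dc - Nc := by
      rw [show T * Dc - Nc = -(Nc - T * Dc) by ring]
      exact dvd_neg.mpr h1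
    rw [hGsplit]
    exact dvd_add (dvd_add (ha.mul_right _) (hb.mul_right _)) (h3.mul_right _)
  have hGeven : G.comp (-Polynomial.X) = G := by
    rw [hGdef]
    simp only [sub_comp, mul_comp, comp_assoc, neg_comp, X_comp, neg_neg, comp_X]
    ring
  have hGco : ∀ k < 2 * (p / 2 + 1), G.coeff k = 0 := by
    intro k hk
    by_cases hkp : k < p + 1
    · exact Polynomial.X_pow_dvd_iff.mp hGdvd k hkp
    · have hk2 : k % 2 = 1 := by omega
      have hodd : Odd k := Nat.odd_iff.mpr hk2
      have h := congrArg (fun q => Polynomial.coeff q k) hGeven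
      simp only [hcompco] at h
      rw [Odd.neg_one_pow hodd] at h
      have h0 : (2:ℂ) * G.coeff k = 0 := by linear_combination -h
      exact (mul_eq_zero.mp h0).resolve_left two_ne_zero
  -- transfer to E
  have hEmap : E.map (algebraMap ℝ ℂ) = G.comp (Polynomial.C Complex.I * Polynomial.X) := by
    apply Polynomial.eq_of_infinite_eval_eq
    have hsub : Set.range (Complex.ofReal : ℝ → ℂ) ⊆
        { x | Polynomial.eval x (E.map (algebraMap ℝ ℂ))
          = Polynomial.eval x (G.comp (Polynomial.C Complex.I * Polynomial.X)) } := by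
      rintro _ ⟨y, rfl⟩
      show Polynomial.eval (↑y) (E.map (algebraMap ℝ ℂ)) = _
      rw [Polynomial.eval_map, show ((y:ℂ)) = algebraMap ℝ ℂ y from rfl,
        Polynomial.eval₂_at_apply, show algebraMap ℝ ℂ (E.eval y) = ((E.eval y : ℝ) : ℂ) from rfl]
      rw [Polynomial.eval_comp, Polynomial.eval_mul, Polynomial.eval_C, Polynomial.eval_X]
      rw [hGdef]
      simp only [Polynomial.eval_sub, Polynomial.eval_mul, Polynomial.eval_comp,
        Polynomial.eval_neg, Polynomial.eval_X]
      simp only [show (algebraMap ℝ ℂ) y = ((y : ℝ) : ℂ) from rfl]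
      simp only [mul_comm Complex.I ((y : ℝ) : ℂ)]
      exact hE y
    exact Set.Infinite.mono hsub (Set.infinite_range_of_injective Complex.ofReal_injective)
  have hEco : ∀ k < 2 * (p / 2 + 1), E.coeff k = 0 := by
    intro k hk
    have h := congrArg (fun q => Polynomial.coeff q k) hEmap
    simp only [Polynomial.coeff_map, _root_.comp_C_mul_X_coeff] at h
    rw [hGco k hk, mul_zero] at h
    rwa [show (algebraMap ℝ ℂ) (E.coeff k) = ((E.coeff k : ℝ) : ℂ) from rfl,
      Complex.ofReal_eq_zero] at h
  have hdvd : Polynomial.X ^ (2 * (p / 2 + 1)) ∣ E :=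
    Polynomial.X_pow_dvd_iff.mpr hEco
  refine ⟨hdvd, ?_⟩
  obtain ⟨Q, hQ⟩ := hdvd
  have hEy : (fun y : ℝ => E.eval y) = fun y : ℝ => y ^ (2 * (p / 2) + 2) * Q.eval y := by
    have hexp : 2 * (p / 2 + 1) = 2 * (p / 2) + 2 := by ring
    rw [hexp] at hQ
    funext y
    rw [hQ, Polynomial.eval_mul, Polynomial.eval_pow, Polynomial.eval_X]
  rw [hEy]
  have hQO : (fun y : ℝ => Q.eval y) =O[nhds 0] (fun _ : ℝ => (1:ℝ)) :=
    (Polynomial.continuous Q).continuousAt.isBigO_one ℝ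
  have hfin := (Asymptotics.isBigO_refl (fun y : ℝ => y ^ (2 * (p / 2) + 2)) (nhds 0)).mul hQO
  simpa using hfin
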